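/- Let T ≥ 1 and ε ∈ (0,1]. Then there exist widths p₁, p₂ ≤ 2T⌈1/ε⌉, matrices W₁ ∈ ℝ^{p₁×T} and W₂ ∈ ℝ^{p₂×p₁}, vectors b₁ ∈ ℝ^{p₁}, b₂ ∈ ℝ^{p₂}, w₃ ∈ ℝ^{p₂}, and b₃ ∈ ℝ such that the three-layer ReLU network f̂(x) = w₃ᵀ ReLU(W₂ ReLU(W₁ x + b₁) + b₂) + b₃ satisfies |f̂(x) − max_{1≤t≤T} x_t| ≤ ε for all x ∈ [0,1]^T. -/

import Mathlib

open Matrix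

lemma staircase (m : ℕ) (a : ℝ) (ha : 0 ≤ a) :
    ∑ j ∈ Finset.range m, min 1 (max (a - j) 0) = min a m := by
  induction m with
  | zero => simp [min_eq_right ha]
  | succ n ih =>
    rw [Finset.sum_range_succ, ih]
    push_cast
    rcases le_or_gt a n with h | h
    · rw [min_eq_left h, min_eq_left (by linarith : a ≤ (n:ℝ)+1),
        max_eq_right (by linarith : a - n ≤ 0)]
      simp
    · rcases le_or_gt a (n+1) with h2 | h2
      · rw [min_eq_right h.le, min_eq_left h2,
          max_eq_left (by linarith), min_eq_right (by linarith)]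
        ring
      · rw [min_eq_right h.le, min_eq_right h2.le,
          max_eq_left (by linarith), min_eq_left (by linarith)]

theorem relu_three_layer_max_approx (T : ℕ) (hT : 1 ≤ T) (ε : ℝ) (hε : ε ∈ Set.Ioc (0 : ℝ) 1) :
    ∃ (p₁ p₂ : ℕ), p₁ ≤ 2 * T * ⌈1 / ε⌉₊ ∧ p₂ ≤ 2 * T * ⌈1 / ε⌉₊ ∧
      ∃ (W₁ : Matrix (Fin p₁) (Fin T) ℝ) (b₁ : Fin p₁ → ℝ)
        (W₂ : Matrix (Fin p₂) (Fin p₁) ℝ) (b₂ : Fin p₂ → ℝ)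
        (w₃ : Fin p₂ → ℝ) (b₃ : ℝ),
        ∀ x : Fin T → ℝ, (∀ t, x t ∈ Set.Icc (0 : ℝ) 1) →
          |(w₃ ⬝ᵥ (fun r =>
              max ((W₂.mulVec (fun s => max ((W₁.mulVec x + b₁) s) 0) + b₂) r) 0) + b₃)
            - Finset.univ.sup' ⟨⟨0, hT⟩, Finset.mem_univ _⟩ x| ≤ ε := by
  obtain ⟨hε0, hε1⟩ := hε
  set m := ⌈1 / ε⌉₊ with hmdef
  have hm1 : 0 < m := Nat.ceil_pos.mpr (by positivity)
  have hm0R : (0:ℝ) < m := by exact_mod_cast hm1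
  have hεm : 1 ≤ ε * m := by
    have h := Nat.le_ceil (1 / ε)
    rw [div_le_iff₀ hε0] at h
    nlinarith
  refine ⟨T * m, m, Nat.mul_le_mul (by omega) le_rfl, ?_, ?_⟩
  · have := Nat.mul_le_mul (show 1 ≤ 2 * T by omega) (le_refl m)
    simpa using this
  have e : Fin T × Fin m ≃ Fin (T * m) := finProdFinEquiv
  set W₁ : Matrix (Fin (T*m)) (Fin T) ℝ :=
    fun r s => if s = (e.symm r).1 then (m:ℝ) else 0 with hW₁
  set b₁ : Fin (T*m) → ℝ := fun r => -(((e.symm r).2 : ℕ) : ℝ) with hb₁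
  set W₂ : Matrix (Fin m) (Fin (T*m)) ℝ :=
    fun j r => if (e.symm r).2 = j then (-1:ℝ) else 0 with hW₂
  refine ⟨W₁, b₁, W₂, fun _ => 1, fun _ => -(1 / m), 1, ?_⟩
  intro x hx
  set M := Finset.univ.sup' ⟨⟨0, hT⟩, Finset.mem_univ _⟩ x with hM
  have hM0 : 0 ≤ M := le_trans (hx ⟨0, hT⟩).1 (Finset.le_sup' x (Finset.mem_univ _))
  have hM1 : M ≤ 1 := Finset.sup'_le _ _ fun t _ => (hx t).2
  have hMx : ∀ t, x t ≤ M := fun t => Finset.le_sup' x (Finset.mem_univ t)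
  obtain ⟨t₀, -, ht₀⟩ := Finset.exists_mem_eq_sup' ⟨⟨0, hT⟩, Finset.mem_univ _⟩ x
  -- the hidden units
  set H : Fin T → Fin m → ℝ := fun t j => max ((m:ℝ) * x t - j) 0 with hH
  set S : Fin m → ℝ := fun j => ∑ t, H t j with hS
  set z : Fin m → ℝ := fun j => min 1 (S j) with hz
  have hS0 : ∀ j, 0 ≤ S j := fun j => Finset.sum_nonneg fun t _ => le_max_right _ _
  -- layer 1
  have hlayer1 : (fun s => max ((W₁.mulVec x + b₁) s) 0)
      = fun r => H (e.symm r).1 (e.symm r).2 := by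
    funext r
    simp only [Pi.add_apply, Matrix.mulVec, dotProduct, hW₁, hb₁, ite_mul, zero_mul, hH]
    rw [Finset.sum_ite_eq' Finset.univ]
    simp [sub_eq_add_neg]
  rw [hlayer1]
  -- layer 2
  have hlayer2 : ∀ j : Fin m,
      (W₂.mulVec (fun r => H (e.symm r).1 (e.symm r).2)
        + fun _ : Fin m => (1:ℝ)) j = 1 - S j := by
    intro j
    simp only [Pi.add_apply, Matrix.mulVec, dotProduct, hW₂]
    have hre := Fintype.sum_equiv e.symm
      (fun r => (if (e.symm r).2 = j then (-1:ℝ) else 0) * H (e.symm r).1 (e.symm r).2)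
      (fun p : Fin T × Fin m => (if p.2 = j then (-1:ℝ) else 0) * H p.1 p.2)
      (fun r => rfl)
    rw [hre, Fintype.sum_prod_type]
    have : ∀ t : Fin T, ∑ j' : Fin m, (if j' = j then (-1:ℝ) else 0) * H t j' = -H t j := by
      intro t
      simp [ite_mul, Finset.sum_ite_eq']
    rw [Finset.sum_congr rfl (fun t _ => this t), Finset.sum_neg_distrib]
    show -∑ t, H t j + 1 = 1 - S j
    show -∑ t, H t j + 1 = 1 - ∑ t, H t j
    ring
  -- output value
  have hmax2 : ∀ j : Fin m, max (1 - S j) 0 = 1 - z j := by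
    intro j
    show (1 - S j) ⊔ 0 = 1 - min 1 (S j)
    rcases le_total 1 (S j) with h | h
    · rw [min_eq_left h, max_eq_right (by linarith)]; ring
    · rw [min_eq_right h, max_eq_left (by linarith)]
  have hout : ((fun _ : Fin m => -(1 / (m:ℝ))) ⬝ᵥ (fun r =>
      max ((W₂.mulVec (fun r => H (e.symm r).1 (e.symm r).2)
        + fun _ : Fin m => (1:ℝ)) r) 0) + 1) = (1 / m) * ∑ j, z j := by
    simp only [dotProduct]
    rw [Finset.sum_congr rfl (fun j _ => by rw [hlayer2 j, hmax2 j])]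
    rw [Finset.sum_congr rfl (fun j _ => by ring :
      ∀ j ∈ Finset.univ, -(1/(m:ℝ)) * (1 - z j) = (1/m) * z j - (1/m))]
    rw [Finset.sum_sub_distrib, Finset.sum_const, ← Finset.mul_sum]
    simp only [Finset.card_univ, Fintype.card_fin, nsmul_eq_mul]
    field_simp
    ring
  rw [hout]
  -- bounds on z
  have hzlow : ∀ j : Fin m, min 1 (max ((m:ℝ) * M - j) 0) ≤ z j := by
    intro j
    refine min_le_min le_rfl ?_
    have hle : max ((m:ℝ) * x t₀ - j) 0 ≤ S j :=
      Finset.single_le_sum (f := fun t => H t j) (fun t _ => le_max_right _ _)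
        (Finset.mem_univ t₀)
    have hMt : M = x t₀ := ht₀
    rw [hMt]
    exact hle
  have hzhigh : ∀ j : Fin m, z j ≤ min 1 (max ((m:ℝ) * M + 1 - j) 0) := by
    intro j
    rcases le_or_gt ((m:ℝ) * M) j with h | h
    · have hSj : S j = 0 := le_antisymm (Finset.sum_nonpos fun t _ => by
        have : (m:ℝ) * x t - j ≤ 0 := by
          have := hMx t
          nlinarith
        simp [hH, this, max_eq_right]) (hS0 j)
      rw [hz]; simp only [hSj, min_eq_right zero_le_one]
      exact le_min zero_le_one (le_max_right _ _)
    · have : (1:ℝ) ≤ max ((m:ℝ) * M + 1 - j) 0 := le_max_of_le_left (by linarith)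
      rw [min_eq_left this]
      exact min_le_left _ _
  -- staircase sums
  have hsum_low : (m:ℝ) * M ≤ ∑ j, z j := by
    have h1 : ∑ j : Fin m, min 1 (max ((m:ℝ) * M - j) 0) ≤ ∑ j, z j :=
      Finset.sum_le_sum fun j _ => hzlow j
    have h2 : ∑ j : Fin m, min 1 (max ((m:ℝ) * M - j) 0)
        = ∑ j ∈ Finset.range m, min 1 (max ((m:ℝ) * M - j) 0) :=
      Fin.sum_univ_eq_sum_range (fun j : ℕ => min 1 (max ((m:ℝ) * M - j) 0)) m
    rw [h2, staircase m _ (by positivity)] at h1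
    rwa [min_eq_left (by nlinarith : (m:ℝ) * M ≤ m)] at h1
  have hsum_high : ∑ j, z j ≤ (m:ℝ) * M + 1 := by
    have h1 : ∑ j, z j ≤ ∑ j : Fin m, min 1 (max ((m:ℝ) * M + 1 - j) 0) :=
      Finset.sum_le_sum fun j _ => hzhigh j
    have h2 : ∑ j : Fin m, min 1 (max ((m:ℝ) * M + 1 - j) 0)
        = ∑ j ∈ Finset.range m, min 1 (max ((m:ℝ) * M + 1 - j) 0) :=
      Fin.sum_univ_eq_sum_range (fun j : ℕ => min 1 (max ((m:ℝ) * M + 1 - j) 0)) m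
    rw [h2, staircase m _ (by positivity)] at h1
    exact h1.trans (min_le_left _ _)
  -- conclude
  rw [abs_le]
  have hfrac : (0:ℝ) < 1 / m := by positivity
  constructor
  · have h1 : M ≤ (1 / m) * ∑ j, z j := by
      calc M = (1 / m) * ((m:ℝ) * M) := by field_simp
        _ ≤ (1 / m) * ∑ j, z j := mul_le_mul_of_nonneg_left hsum_low hfrac.le
    linarith
  · have h2 : (1 / m) * ∑ j, z j ≤ M + 1 / m := by
      calc (1 / m) * ∑ j, z j ≤ (1 / m) * ((m:ℝ) * M + 1) :=
            mul_le_mul_of_nonneg_left hsum_high hfrac.le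
        _ = M + 1 / m := by field_simp
    have h1m : 1 / (m:ℝ) ≤ ε := by
      rw [div_le_iff₀ hm0R]
      nlinarith
    linarith
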